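/- In the restart framework, let i be an outer index. If j ≥ J_i and x_{i,j+1} is defined (i.e., K_i ≥ j+1), then (f(x_{i,0}) − f_slb)/(f* − f_slb) ≤ 1/(B − v). If moreover j ≥ I_i, then (f(y_{i,j}) − f*)/(f* − f_slb) ≤ ε'. -/

import Mathlib

/-- (Proposition: in the restart framework, if `j ≥ J_i` and `x_{i,j+1}` is
defined then the bound gap at the restart point is controlled, and if moreover `j ≥ I_i`
then `y_{i,j}` is an `ε'`-relative solution). -/
theorem restart_framework_relative_solution {n : ℕ} (Q : Set (EuclideanSpace ℝ (Fin n)))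
    (hQne : Q.Nonempty) (hQcl : IsClosed Q) (hQcv : Convex ℝ Q)
    (f : EuclideanSpace ℝ (Fin n) → ℝ) (hfc : ConvexOn ℝ Q f)
    (fstar : ℝ) (hattain : ∃ z ∈ Q, f z = fstar) (hmin : ∀ z ∈ Q, fstar ≤ f z)
    (fslb : ℝ) (hslb : fslb < fstar)
    (B v ε' : ℝ) (hB : 0 < B) (hv : 0 < v) (hBv : v ≤ B - B ^ 2) (hB2v : 2 * v ≤ B)
    (hε' : 0 < ε')
    (x y : ℕ → ℕ → EuclideanSpace ℝ (Fin n)) (K : ℕ → ℕ∞)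
    (x0 : EuclideanSpace ℝ (Fin n)) (hx0 : x0 ∈ Q)
    (hx10 : x 1 0 = x0) (hy10 : y 1 0 = x0)
    (hmem : ∀ i j : ℕ, 1 ≤ i → (j : ℕ∞) ≤ K i → x i j ∈ Q ∧ y i j ∈ Q)
    (hKlt : ∀ i j : ℕ, 1 ≤ i → (j : ℕ∞) < K i →
      B ≤ (f (x i j) - fslb) / (f (x i 0) - fslb))
    (hKeq : ∀ i j : ℕ, 1 ≤ i → K i = (j : ℕ∞) →
      (f (x i j) - fslb) / (f (x i 0) - fslb) < B)
    (hrestart : ∀ i j : ℕ, 1 ≤ i → K i = (j : ℕ∞) →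
      x (i + 1) 0 = x i j ∧ y (i + 1) 0 = x i j)
    (J I : ℕ → ℕ)
    (hJ : ∀ i k : ℕ, 1 ≤ i → J i ≤ k → (k : ℕ∞) ≤ K i →
      f (x i k) - fstar ≤ v * (f (x i 0) - fslb))
    (hI : ∀ i k : ℕ, 1 ≤ i → I i ≤ k → (k : ℕ∞) ≤ K i →
      f (y i k) - fstar ≤ v * ε' * (f (x i 0) - fslb))
    (i j : ℕ) (hi : 1 ≤ i) (hJij : J i ≤ j) (hdef : ((j + 1 : ℕ) : ℕ∞) ≤ K i) :
    (f (x i 0) - fslb) / (fstar - fslb) ≤ 1 / (B - v) ∧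
    (I i ≤ j → (f (y i j) - fstar) / (fstar - fslb) ≤ ε') := by
  have hstar : (0:ℝ) < fstar - fslb := by linarith
  have hx0Q : x i 0 ∈ Q := (hmem i 0 hi zero_le).1
  have hD0 : fstar - fslb ≤ f (x i 0) - fslb := by have := hmin _ hx0Q; linarith
  have hD0pos : (0:ℝ) < f (x i 0) - fslb := lt_of_lt_of_le hstar hD0
  have hjlt : (j : ℕ∞) < K i := lt_of_lt_of_le (by exact_mod_cast Nat.lt_succ_self j) hdef
  have hjle : (j : ℕ∞) ≤ K i := hjlt.le
  have hBle := hKlt i j hi hjlt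
  have hJb := hJ i j hi hJij hjle
  have hBD : B * (f (x i 0) - fslb) ≤ f (x i j) - fslb := by
    rw [le_div_iff₀ hD0pos] at hBle; linarith
  have hBvpos : (0:ℝ) < B - v := by linarith
  have key : (B - v) * (f (x i 0) - fslb) ≤ fstar - fslb := by linarith
  constructor
  · rw [div_le_div_iff₀ hstar hBvpos]; nlinarith
  · intro hIij
    have hIb := hI i j hi hIij hjle
    rw [div_le_iff₀ hstar]
    have hvD : v * (f (x i 0) - fslb) ≤ fstar - fslb := by nlinarith
    nlinarith
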